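/- For positive integers n and 0 ≤ k ≤ n, the polynomial identity ∑_{j=0}^{n} (∑_{i=0}^{n-k} C(n-k,i)·C(k,j-i)·C(n-k+j-i,j)) t^{n-j} = ∑_{r=0}^{⌊n/2⌋} C(n-k,r)·C(n-r,r)·t^r·(1+t)^{n-2r} holds in ℤ[t]. -/

import Mathlib

open Finset Polynomial

lemma sum_ext_range {M : Type*} [AddCommMonoid M] {f : ℕ → M} {c d : ℕ} (h : c ≤ d)
    (h0 : ∀ x, c ≤ x → f x = 0) :
    ∑ x ∈ Finset.range c, f x = ∑ x ∈ Finset.range d, f x :=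
  Finset.sum_subset (Finset.range_subset_range.2 h)
    (fun x _ hx' => h0 x (by simp only [Finset.mem_range] at hx'; omega))

lemma trinom (q r s : ℕ) : q.choose r * (q - r).choose s = q.choose s * (q - s).choose r := by
  rcases le_or_gt (r + s) q with h | h
  · have h1 := Nat.choose_mul (n := q) (Nat.le_add_right r s)
    have h2 := Nat.choose_mul (n := q) (Nat.le_add_left s r)
    rw [Nat.add_sub_cancel_left] at h1
    rw [Nat.add_sub_cancel] at h2
    rw [← h1, ← h2, Nat.choose_symm_add]
  · have e1 : q.choose r * (q - r).choose s = 0 := by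
      rcases le_or_gt r q with hr | hr
      · rw [Nat.choose_eq_zero_of_lt (show q - r < s by omega), mul_zero]
      · rw [Nat.choose_eq_zero_of_lt hr, zero_mul]
    have e2 : q.choose s * (q - s).choose r = 0 := by
      rcases le_or_gt s q with hs | hs
      · rw [Nat.choose_eq_zero_of_lt (show q - s < r by omega), mul_zero]
      · rw [Nat.choose_eq_zero_of_lt hs, zero_mul]
    rw [e1, e2]

lemma vand (a b c : ℕ) (hac : a ≤ c) :
    ∑ r ∈ Finset.range (c + 1), a.choose r * b.choose r = (a + b).choose b := by
  have h := Nat.add_choose_eq a b b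
  rw [Finset.Nat.sum_antidiagonal_eq_sum_range_succ (fun x y => a.choose x * b.choose y)] at h
  calc ∑ r ∈ Finset.range (c + 1), a.choose r * b.choose r
      = ∑ r ∈ Finset.range (c + b + 1), a.choose r * b.choose r :=
        sum_ext_range (by omega)
          (fun x hx => by rw [Nat.choose_eq_zero_of_lt (by omega), zero_mul])
    _ = ∑ r ∈ Finset.range (b + 1), a.choose r * b.choose r :=
        (sum_ext_range (by omega)
          (fun x hx => by rw [Nat.choose_eq_zero_of_lt (show b < x by omega), mul_zero])).symm
    _ = (a + b).choose b := by
        rw [h]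
        refine Finset.sum_congr rfl fun x hx => ?_
        rw [Finset.mem_range] at hx
        rw [Nat.choose_symm (show x ≤ b by omega)]

lemma core (n k m j : ℕ) (hk : k ≤ n) (hmj : m + j = n) :
    (∑ i ∈ Finset.range (n - k + 1), (n - k).choose i *
       (if i ≤ j then k.choose (j - i) * (n - k + j - i).choose j else 0))
    = ∑ r ∈ Finset.range (n / 2 + 1), (n - k).choose r * (n - r).choose r *
       (if r ≤ m then (n - 2 * r).choose (m - r) else 0) := by
  set q := n - k with hq
  have hn : n = q + k := by omega
  -- Step 1: rewrite RHS termwise to q.choose r * (j.choose r * (n-r).choose j)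
  have hR1 : ∑ r ∈ Finset.range (n / 2 + 1), q.choose r * (n - r).choose r *
       (if r ≤ m then (n - 2 * r).choose (m - r) else 0)
      = ∑ r ∈ Finset.range (n / 2 + 1), q.choose r * (j.choose r * (n - r).choose j) := by
    refine Finset.sum_congr rfl fun r hr => ?_
    rw [Finset.mem_range] at hr
    have h2r : 2 * r ≤ n := by omega
    by_cases hrm : r ≤ m
    · rw [if_pos hrm]
      by_cases hrj : r ≤ j
      · have hch := Nat.choose_mul (n := n - r) hrj
        have e1 : n - r - r = n - 2 * r := by omega
        have e2 : (n - 2 * r).choose (j - r) = (n - 2 * r).choose (m - r) := by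
          rw [← Nat.choose_symm (show j - r ≤ n - 2 * r by omega)]
          congr 1
          omega
        rw [e1, e2] at hch
        rw [mul_assoc, ← hch, mul_comm (Nat.choose (n - r) j)]
      · rw [Nat.choose_eq_zero_of_lt (show n - 2 * r < m - r by omega),
          Nat.choose_eq_zero_of_lt (show j < r by omega)]
        ring
    · rw [if_neg hrm, Nat.choose_eq_zero_of_lt (show n - r < j by omega)]
      ring
  rw [hR1]
  -- Step 2: extend RHS range to n+1, then shrink to q+1
  have hzero : ∀ x, n / 2 + 1 ≤ x → q.choose x * (j.choose x * (n - x).choose j) = 0 := by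
    intro x hx
    by_cases hxj : x ≤ j
    · rw [Nat.choose_eq_zero_of_lt (show n - x < j by omega)]
      ring
    · rw [Nat.choose_eq_zero_of_lt (show j < x by omega)]
      ring
  rw [sum_ext_range (show n / 2 + 1 ≤ n + 1 by omega) hzero]
  rw [← sum_ext_range (show q + 1 ≤ n + 1 by omega)
      (fun x hx => by rw [Nat.choose_eq_zero_of_lt (show q < x by omega), zero_mul])]
  -- Step 3: Vandermonde on (n - r).choose j
  have hV : ∀ r ∈ Finset.range (q + 1),
      q.choose r * (j.choose r * (n - r).choose j)
      = ∑ s ∈ Finset.range (j + 1),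
          q.choose r * j.choose r * (k.choose s * (q - r).choose (j - s)) := by
    intro r hr
    rw [Finset.mem_range] at hr
    have : n - r = k + (q - r) := by omega
    rw [this, Nat.add_choose_eq,
      Finset.Nat.sum_antidiagonal_eq_sum_range_succ (fun x y => k.choose x * (q - r).choose y),
      Finset.mul_sum, Finset.mul_sum]
    exact Finset.sum_congr rfl fun s _ => by ring
  rw [Finset.sum_congr rfl hV, Finset.sum_comm]
  -- Step 4: inner sum via trinomial revision + Vandermonde
  have hI : ∀ s ∈ Finset.range (j + 1),
      ∑ r ∈ Finset.range (q + 1), q.choose r * j.choose r * (k.choose s * (q - r).choose (j - s))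
      = k.choose s * (q.choose (j - s) * ((q - (j - s)) + j).choose j) := by
    intro s _
    have h1 : ∀ r ∈ Finset.range (q + 1),
        q.choose r * j.choose r * (k.choose s * (q - r).choose (j - s))
        = k.choose s * q.choose (j - s) * ((q - (j - s)).choose r * j.choose r) := by
      intro r _
      have := trinom q r (j - s)
      calc q.choose r * j.choose r * (k.choose s * (q - r).choose (j - s))
          = k.choose s * (q.choose r * (q - r).choose (j - s)) * j.choose r := by ring
        _ = k.choose s * (q.choose (j - s) * (q - (j - s)).choose r) * j.choose r := by rw [this]
        _ = k.choose s * q.choose (j - s) * ((q - (j - s)).choose r * j.choose r) := by ring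
    rw [Finset.sum_congr rfl h1, ← Finset.mul_sum, vand (q - (j - s)) j q (by omega), mul_assoc]
  rw [Finset.sum_congr rfl hI]
  -- Step 5: reflect the sum
  conv_rhs => rw [← Finset.sum_range_reflect]
  have h5 : ∀ i ∈ Finset.range (j + 1),
      k.choose (j + 1 - 1 - i) * (q.choose (j - (j + 1 - 1 - i)) *
        ((q - (j - (j + 1 - 1 - i))) + j).choose j)
      = q.choose i * (if i ≤ j then k.choose (j - i) * (q + j - i).choose j else 0) := by
    intro i hi
    rw [Finset.mem_range] at hi
    have e0 : j + 1 - 1 - i = j - i := by omega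
    have e1 : j - (j - i) = i := by omega
    rw [e0, e1, if_pos (show i ≤ j by omega)]
    rcases le_or_gt i q with hiq | hiq
    · have : q - i + j = q + j - i := by omega
      rw [this]
      ring
    · rw [Nat.choose_eq_zero_of_lt hiq]
      ring
  rw [Finset.sum_congr rfl h5]
  -- Step 6: match ranges
  rw [sum_ext_range (show j + 1 ≤ q + j + 1 by omega)
      (fun x hx => by rw [if_neg (show ¬ x ≤ j by omega), mul_zero])]
  rw [← sum_ext_range (show q + 1 ≤ q + j + 1 by omega)
      (fun x hx => by rw [Nat.choose_eq_zero_of_lt (show q < x by omega), zero_mul])]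

theorem stmt_1 (n k : ℕ) (hn : 0 < n) (hk : k ≤ n) :
    (∑ j ∈ Finset.range (n + 1),
        C (((∑ i ∈ Finset.range (n - k + 1),
            (n - k).choose i *
              (if i ≤ j then k.choose (j - i) * (n - k + j - i).choose j else 0) : ℕ) : ℤ)) *
          X ^ (n - j)) =
      ∑ r ∈ Finset.range (n / 2 + 1),
        C ((((n - k).choose r * (n - r).choose r : ℕ) : ℤ)) * X ^ r *
          (1 + X) ^ (n - 2 * r) := by
  apply Polynomial.ext
  intro m
  rw [Polynomial.finset_sum_coeff, Polynomial.finset_sum_coeff]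
  simp only [mul_assoc, Polynomial.coeff_C_mul, Polynomial.coeff_X_pow,
    Polynomial.coeff_X_pow_mul', Polynomial.coeff_one_add_X_pow, mul_ite, mul_one, mul_zero]
  rcases le_or_gt m n with hmn | hmn
  · rw [Finset.sum_eq_single_of_mem (n - m) (Finset.mem_range.2 (by omega))
      (fun j hj hne => by
        rw [Finset.mem_range] at hj
        rw [if_neg (show ¬ m = n - j by omega)])]
    rw [if_pos (show m = n - (n - m) by omega)]
    have hcore := core n k m (n - m) hk (by omega)
    have hc2 : (((∑ i ∈ Finset.range (n - k + 1), (n - k).choose i *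
        (if i ≤ n - m then k.choose (n - m - i) * (n - k + (n - m) - i).choose (n - m) else 0) : ℕ)) : ℤ)
        = (((∑ r ∈ Finset.range (n / 2 + 1), (n - k).choose r * (n - r).choose r *
            (if r ≤ m then (n - 2 * r).choose (m - r) else 0) : ℕ)) : ℤ) := by
      exact_mod_cast hcore
    push_cast at hc2 ⊢
    simp only [mul_ite, mul_zero, mul_assoc] at hc2 ⊢
    exact hc2
  · rw [Finset.sum_eq_zero (fun j hj => by
        rw [Finset.mem_range] at hj
        rw [if_neg (show ¬ m = n - j by omega)]),
      Finset.sum_eq_zero (fun r hr => ?_)]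
    rw [Finset.mem_range] at hr
    rw [Nat.choose_eq_zero_of_lt (show n - 2 * r < m - r by omega)]
    simp
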